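/- Let Σ be a set, s : Σ × Σ → ℝ a sane scoring function, and γ, δ : Σ⁺ → ℝ positive subadditive gap penalties. Let S be the global (Needleman-Wunsch) similarity on Σ* extending s, γ, δ. Then for every word x ∈ Σ*, S(x,x) = Σᵢ s(xᵢ,xᵢ), and S is itself sane: S(x,x) > 0 for x ≠ e, S(x,x) ≥ S(x,y) and S(x,x) ≥ S(y,x) for all x,y. -/

import Mathlib

/-- If `s` is a sane scoring function and `γ, δ` are gap penalties, then the
global (Needleman-Wunsch) similarity `S` satisfies `S(x,x) = ∑ᵢ s(xᵢ,xᵢ)` and is itself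
sane: `S(x,x) > 0` for `x ≠ e`, `S(x,x) ≥ S(x,y)` and `S(x,x) ≥ S(y,x)`. -/
theorem globalSimilarity_sane {A : Type*} (s : A → A → ℝ) (γ δ : List A → ℝ)
    (S : List A → List A → ℝ)
    (hsane1 : ∀ a, 0 < s a a)
    (hsane2 : ∀ a b, s a b ≤ s a a)
    (hsane3 : ∀ a b, s b a ≤ s a a)
    (hγpos : ∀ u : List A, u ≠ [] → 0 < γ u)
    (hγsub : ∀ u v : List A, u ≠ [] → v ≠ [] → γ (u ++ v) ≤ γ u + γ v)
    (hδpos : ∀ u : List A, u ≠ [] → 0 < δ u)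
    (hδsub : ∀ u v : List A, u ≠ [] → v ≠ [] → δ (u ++ v) ≤ δ u + δ v)
    (hS0 : S [] [] = 0)
    (hSe1 : ∀ y : List A, y ≠ [] → S [] y = -γ y)
    (hSe2 : ∀ x : List A, x ≠ [] → S x [] = -δ x)
    (hSrec : ∀ (x y : List A) (a b : A),
      S (x ++ [a]) (y ++ [b]) =
        max (S x y + s a b)
          (max
            ((Finset.Icc 1 (y.length + 1)).sup'
              ⟨1, Finset.mem_Icc.mpr ⟨le_rfl, Nat.le_add_left 1 y.length⟩⟩
              (fun k => S (x ++ [a]) ((y ++ [b]).take (y.length + 1 - k))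
                - γ ((y ++ [b]).drop (y.length + 1 - k))))
            ((Finset.Icc 1 (x.length + 1)).sup'
              ⟨1, Finset.mem_Icc.mpr ⟨le_rfl, Nat.le_add_left 1 x.length⟩⟩
              (fun k => S ((x ++ [a]).take (x.length + 1 - k)) (y ++ [b])
                - δ ((x ++ [a]).drop (x.length + 1 - k)))))) :
    (∀ x : List A, S x x = (x.map fun a => s a a).sum) ∧
    (∀ x : List A, x ≠ [] → 0 < S x x) ∧
    (∀ x y : List A, S x y ≤ S x x) ∧
    (∀ x y : List A, S y x ≤ S x x) := by

  set T : List A → ℝ := fun x => (x.map fun a => s a a).sum with hT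
  have hTnil : T [] = 0 := by simp [hT]
  have hTapp : ∀ (x : List A) (a : A), T (x ++ [a]) = T x + s a a := by
    intro x a; simp [hT]
  have hTnonneg : ∀ x : List A, 0 ≤ T x := by
    intro x
    apply List.sum_nonneg
    intro r hr
    simp only [List.mem_map] at hr
    obtain ⟨a, _, rfl⟩ := hr
    exact (hsane1 a).le
  have hTsplit : ∀ (x : List A) (i : ℕ), T x = T (x.take i) + T (x.drop i) := by
    intro x i
    conv_lhs => rw [← List.take_append_drop i x]
    simp [hT]
  have hTpos : ∀ x : List A, x ≠ [] → 0 < T x := by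
    intro x hx
    apply List.sum_pos
    · intro r hr
      simp only [List.mem_map] at hr
      obtain ⟨a, _, rfl⟩ := hr
      exact hsane1 a
    · simpa [hT] using hx
  have hlow : ∀ x : List A, T x ≤ S x x := by
    intro x
    induction x using List.reverseRecOn with
    | nil => simp [hTnil, hS0]
    | append_singleton x a ih =>
      rw [hSrec x x a a, hTapp]
      exact le_max_of_le_left (add_le_add_left ih _)
  have hupper : ∀ n : ℕ, ∀ x y : List A, x.length + y.length ≤ n →
      S x y ≤ T x ∧ S x y ≤ T y := by
    intro n
    induction n with
    | zero =>
      intro x y h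
      have hx : x = [] := List.length_eq_zero_iff.mp (by omega)
      have hy : y = [] := List.length_eq_zero_iff.mp (by omega)
      subst hx; subst hy
      simp [hS0, hTnil]
    | succ n ih =>
      intro x y hlen
      rcases List.eq_nil_or_concat x with rfl | ⟨x', a, rfl⟩
      · rcases eq_or_ne y [] with rfl | hy
        · simp [hS0, hTnil]
        · rw [hSe1 y hy]
          have h1 := hγpos y hy
          have h2 := hTnonneg y
          constructor
          · rw [hTnil]; linarith
          · linarith
      · simp only [List.concat_eq_append] at hlen ⊢
        rcases List.eq_nil_or_concat y with rfl | ⟨y', b, rfl⟩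
        · have hx : x' ++ [a] ≠ [] := by simp
          rw [hSe2 _ hx]
          have h1 := hδpos _ hx
          have h2 := hTnonneg (x' ++ [a])
          constructor
          · linarith
          · rw [hTnil]; linarith
        · simp only [List.concat_eq_append] at hlen ⊢
          rw [hSrec x' y' a b]
          simp only [List.length_append, List.length_cons, List.length_nil] at hlen
          have hA : S x' y' ≤ T x' ∧ S x' y' ≤ T y' := ih x' y' (by omega)
          have hB : ∀ k ∈ Finset.Icc 1 (y'.length + 1),
              S (x' ++ [a]) ((y' ++ [b]).take (y'.length + 1 - k))
                - γ ((y' ++ [b]).drop (y'.length + 1 - k)) ≤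
                min (T (x' ++ [a])) (T (y' ++ [b])) := by
            intro k hk
            rw [Finset.mem_Icc] at hk
            set i := y'.length + 1 - k with hi
            have hlenY : (y' ++ [b]).length = y'.length + 1 := by simp
            have htlen : ((y' ++ [b]).take i).length = i := by
              rw [List.length_take]; omega
            have hih := ih (x' ++ [a]) ((y' ++ [b]).take i)
              (by simp only [List.length_append, List.length_take, List.length_cons,
                    List.length_nil]; omega)
            have hdne : (y' ++ [b]).drop i ≠ [] := by
              intro hcon
              have := congrArg List.length hcon
              rw [List.length_drop] at this
              simp only [List.length_nil, List.length_append, List.length_cons] at this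
              omega
            have hg := hγpos _ hdne
            have hTt : T ((y' ++ [b]).take i) ≤ T (y' ++ [b]) := by
              have := hTsplit (y' ++ [b]) i
              have := hTnonneg ((y' ++ [b]).drop i)
              linarith
            refine le_min ?_ ?_
            · linarith [hih.1]
            · linarith [hih.2]
          have hC : ∀ k ∈ Finset.Icc 1 (x'.length + 1),
              S ((x' ++ [a]).take (x'.length + 1 - k)) (y' ++ [b])
                - δ ((x' ++ [a]).drop (x'.length + 1 - k)) ≤
                min (T (x' ++ [a])) (T (y' ++ [b])) := by
            intro k hk
            rw [Finset.mem_Icc] at hk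
            set i := x'.length + 1 - k with hi
            have htlen : ((x' ++ [a]).take i).length = i := by
              rw [List.length_take]; simp; omega
            have hih := ih ((x' ++ [a]).take i) (y' ++ [b])
              (by simp only [List.length_append, List.length_take, List.length_cons,
                    List.length_nil]; omega)
            have hdne : (x' ++ [a]).drop i ≠ [] := by
              intro hcon
              have := congrArg List.length hcon
              rw [List.length_drop] at this
              simp only [List.length_nil, List.length_append, List.length_cons] at this
              omega
            have hg := hδpos _ hdne
            have hTt : T ((x' ++ [a]).take i) ≤ T (x' ++ [a]) := by
              have := hTsplit (x' ++ [a]) i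
              have := hTnonneg ((x' ++ [a]).drop i)
              linarith
            refine le_min ?_ ?_
            · linarith [hih.1]
            · linarith [hih.2]
          have hBs := Finset.sup'_le (Finset.nonempty_Icc.mpr (by omega)) _ hB
          have hCs := Finset.sup'_le (Finset.nonempty_Icc.mpr (by omega)) _ hC
          rw [le_min_iff] at hBs hCs
          have hsab : s a b ≤ s a a := hsane2 a b
          have hsab' : s a b ≤ s b b := hsane3 b a
          constructor
          · rw [hTapp]
            refine max_le (by linarith [hA.1]) (max_le ?_ ?_)
            · rw [← hTapp]; exact hBs.1
            · rw [← hTapp]; exact hCs.1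
          · rw [hTapp]
            refine max_le (by linarith [hA.2]) (max_le ?_ ?_)
            · rw [← hTapp]; exact hBs.2
            · rw [← hTapp]; exact hCs.2
  have hupp : ∀ x y : List A, S x y ≤ T x ∧ S x y ≤ T y := fun x y =>
    hupper (x.length + y.length) x y le_rfl
  have hSxx : ∀ x : List A, S x x = T x := fun x =>
    le_antisymm (hupp x x).1 (hlow x)
  refine ⟨fun x => hSxx x, ?_, ?_, ?_⟩
  · intro x hx; rw [hSxx]; exact hTpos x hx
  · intro x y; rw [hSxx]; exact (hupp x y).1
  · intro x y; rw [hSxx]; exact (hupp y x).2
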